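/- Let c₁ ≥ 1 be a real number such that ⟨φ^{2t}⟩ ≤ (c₁ t)^{2t} for every natural number t ≥ 1, and let n ≥ 1 be a natural number (playing the role of 2κ, so κ = n/2). Then for all natural numbers m ≥ 1, s with 1 ≤ s ≤ 2m, and s', s'' with 2(s' + s'') ≤ n·s, one has |⟨π^{2m−s} φ^{s'} Φ₀^{s''}⟩| ≤ 3 · ⟨Φ₀^{2nm}⟩^{s''/(2nm)} · max( ⟨π^{2m}⟩^{1 − s/(2m)} · (2 c₁ n m)^{s'}, (2 c₁ n m)^{2m + s' − s} ), where the powers of the nonnegative reals ⟨Φ₀^{2nm}⟩ and ⟨π^{2m}⟩ are real powers. -/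

import Mathlib

open scoped ComplexOrder
open Complex Finset




open scoped ComplexOrder
open Complex Finset

namespace Stmt7

/-! ### Positivity and Cauchy–Schwarz for states -/

section Pos
variable {A : Type*} [Ring A] [Algebra ℂ A] [StarRing A] [StarModule ℂ A]
variable (ω : A →ₗ[ℂ] ℂ) (hωpos : ∀ a : A, 0 ≤ ω (star a * a))
include hωpos

omit [StarModule ℂ A] in
lemma re_nn (a : A) : 0 ≤ (ω (star a * a)).re := by
  have := hωpos a; rw [Complex.nonneg_iff] at this; exact this.1

omit [StarModule ℂ A] in
lemma im_z (a : A) : (ω (star a * a)).im = 0 := by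
  have := hωpos a; rw [Complex.nonneg_iff] at this; exact this.2.symm

lemma herm (a : A) : ω (star a) = (starRingEnd ℂ) (ω a) := by
  have h1 := im_z ω hωpos (1 + a)
  have h2 := im_z ω hωpos (1 + Complex.I • a)
  have ha := im_z ω hωpos a
  have h1' : (ω 1 + ω a + ω (star a) + ω (star a * a)).im = 0 := by
    rw [← h1]; congr 1
    have : star (1 + a) * (1 + a) = 1 + a + star a + star a * a := by
      simp [star_add, add_mul, mul_add]; abel
    rw [this]; simp
  have h2' : (ω 1 + Complex.I * ω a + (- Complex.I) * ω (star a) + ω (star a * a)).im = 0 := by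
    rw [← h2]; congr 1
    have : star (1 + Complex.I • a) * (1 + Complex.I • a)
        = 1 + Complex.I • a + (- Complex.I) • star a + star a * a := by
      simp [star_add, add_mul, mul_add, star_smul, smul_smul, Complex.conj_I, neg_smul]
      abel
    rw [this]; simp [neg_smul]
  have him1 : (ω 1).im = 0 := by
    have : (1:A) = star (1:A) * 1 := by simp
    rw [this]; exact im_z ω hωpos 1
  simp [Complex.add_im, Complex.mul_im, him1, ha, Complex.I_re, Complex.I_im] at h1' h2'
  apply Complex.ext <;> simp [Complex.conj_re, Complex.conj_im] <;> linarith

set_option maxHeartbeats 1000000 in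
lemma cs (hherm : ∀ x : A, ω (star x) = (starRingEnd ℂ) (ω x)) (a b : A) :
    ‖ω (star a * b)‖ ^ 2 ≤ (ω (star a * a)).re * (ω (star b * b)).re := by
  have hAnn : 0 ≤ (ω (star a * a)).re := by
    have := hωpos a; rw [Complex.nonneg_iff] at this; exact this.1
  have hBnn : 0 ≤ (ω (star b * b)).re := by
    have := hωpos b; rw [Complex.nonneg_iff] at this; exact this.1
  set z := ω (star a * b) with hzdef
  by_cases hz : z = 0
  · rw [hz]; simpa using mul_nonneg hAnn hBnn
  · set c : ℂ := (starRingEnd ℂ) z / ((‖z‖ : ℝ) : ℂ) with hcdef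
    have habs : (0:ℝ) < ‖z‖ := by
      simpa [norm_pos_iff] using hz
    have hba : ω (star b * a) = (starRingEnd ℂ) z := by
      have : star (star a * b) = star b * a := by simp
      rw [← this, hherm, hzdef]
    have hcz : c * z = ((‖z‖ : ℝ) : ℂ) := by
      rw [hcdef]; field_simp
      rw [mul_comm]
      rw [Complex.mul_conj]
      norm_cast
      rw [← Complex.sq_norm]
    have hcc : (starRingEnd ℂ) c * c = 1 := by
      have : ‖c‖ = 1 := by
        simp [hcdef, map_div₀, Complex.norm_conj]
        simp [hz]
      calc (starRingEnd ℂ) c * c = ((‖c‖ :ℝ):ℂ)^2 := by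
            rw [mul_comm, Complex.mul_conj]; norm_cast; rw [← Complex.sq_norm]
        _ = 1 := by rw [this]; norm_num
    have key : ∀ t : ℝ, 0 ≤ t^2 * (ω (star a * a)).re - 2*t*‖z‖ + (ω (star b * b)).re := by
      intro t
      set x : A := (t:ℂ) • a - c • b with hxdef
      have hsx : star x = (t:ℂ) • star a - (starRingEnd ℂ) c • star b := by
        simp [hxdef, star_sub, star_smul, Complex.conj_ofReal]
      have ex : star x * x = ((t:ℂ)*(t:ℂ)) • (star a * a) - ((t:ℂ)*c) • (star a * b)
          - ((starRingEnd ℂ) c * (t:ℂ)) • (star b * a) + ((starRingEnd ℂ) c * c) • (star b * b) := by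
        rw [hsx, hxdef, sub_mul, mul_sub, mul_sub, smul_mul_smul_comm, smul_mul_smul_comm,
          smul_mul_smul_comm, smul_mul_smul_comm]
        abel
      have hωx : ω (star x * x) = ((t^2:ℝ):ℂ) * ω (star a * a)
          - ((t * ‖z‖ : ℝ) : ℂ) - ((t * ‖z‖ : ℝ) : ℂ) + ω (star b * b) := by
        rw [ex]
        simp only [map_add, map_sub, LinearMap.map_smul, smul_eq_mul, hba]
        rw [hcc]
        have h1 : (t:ℂ)*c*z = (t:ℂ)*((‖z‖ : ℝ) : ℂ) := by rw [mul_assoc, hcz]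
        have h2 : (starRingEnd ℂ) c * (t:ℂ) * (starRingEnd ℂ) z
            = (t:ℂ)*((‖z‖ : ℝ) : ℂ) := by
          have hcc2 : (starRingEnd ℂ) c * (starRingEnd ℂ) z = (starRingEnd ℂ) (z * c) := by
            rw [map_mul]; ring
          rw [mul_comm ((starRingEnd ℂ) c) (t:ℂ), mul_assoc, hcc2, mul_comm z c, hcz]
          simp [Complex.conj_ofReal]
        rw [h1, h2]
        push_cast
        ring
      have h0 := hωpos x
      rw [Complex.nonneg_iff] at h0
      have := h0.1
      rw [hωx] at this
      have himaa : (ω (star a * a)).im = 0 := by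
        have := hωpos a; rw [Complex.nonneg_iff] at this; exact this.2.symm
      simp only [Complex.add_re, Complex.sub_re, Complex.mul_re, Complex.ofReal_re,
        Complex.ofReal_im, himaa] at this
      nlinarith [this]
    rcases eq_or_lt_of_le hAnn with hA0 | hApos
    · exfalso
      have := key (((ω (star b * b)).re + 1)/(2*‖z‖))
      rw [← hA0] at this
      have h2 : ((ω (star b * b)).re + 1)/(2*‖z‖) * (2 * ‖z‖)
          = (ω (star b * b)).re + 1 := by field_simp
      nlinarith [this, habs, h2]
    · have hk := key (‖z‖ / (ω (star a * a)).re)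
      rw [div_pow] at hk
      have e1 : ‖z‖ ^ 2 / (ω (star a * a)).re ^2 * (ω (star a * a)).re
          = ‖z‖ ^ 2 / (ω (star a * a)).re := by field_simp
      have e2 : 2 * (‖z‖ / (ω (star a * a)).re) * ‖z‖
          = 2 * (‖z‖ ^2 / (ω (star a * a)).re) := by ring
      rw [e1, e2] at hk
      have h3 : ‖z‖ ^2 / (ω (star a * a)).re ≤ (ω (star b * b)).re := by linarith
      have h4 := mul_le_mul_of_nonneg_right h3 (le_of_lt hApos)
      have e3 : ‖z‖ ^ 2 / (ω (star a * a)).re * (ω (star a * a)).re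
          = ‖z‖ ^ 2 := by field_simp
      rw [e3] at h4
      linarith [h4]

/-! ### Moment chain -/

lemma mom_chain (hω1 : ω 1 = 1)
    (hcs : ∀ a b : A, ‖ω (star a * b)‖ ^ 2 ≤ (ω (star a * a)).re * (ω (star b * b)).re)
    (X : A) (hX : star X = X) (R : ℕ) (hR : 1 ≤ R) (w : ℕ) (hw : w ≤ R) :
    (ω (X^(2*w))).re ≤ (ω (X^(2*R))).re ^ ((w:ℝ)/(R:ℝ)) := by
  set Ak : ℕ → ℝ := fun k => (ω (X^(2*k))).re with hAk
  have hsq : ∀ k : ℕ, X ^ (2*k) = star (X ^ k) * X ^ k := by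
    intro k; rw [star_pow, hX, ← pow_add, two_mul]
  have hAnn : ∀ k, 0 ≤ Ak k := by
    intro k; rw [hAk]; simp only; rw [hsq k]
    have := hωpos (X^k); rw [Complex.nonneg_iff] at this; exact this.1
  have hA0 : Ak 0 = 1 := by simp [hAk, hω1]
  have hlc : ∀ k, Ak (k+1) ^ 2 ≤ Ak k * Ak (k+2) := by
    intro k
    have h1 := hcs (X^k) (X^(k+2))
    have e : star (X^k) * X^(k+2) = X^(2*(k+1)) := by
      rw [star_pow, hX, ← pow_add]; ring_nf
    rw [e, ← hsq k, ← hsq (k+2)] at h1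
    refine le_trans ?_ h1
    have h2 : Ak (k+1) ≤ ‖ω (X ^ (2 * (k + 1)))‖ := Complex.re_le_norm _
    exact pow_le_pow_left₀ (hAnn _) h2 2
  have S1 : ∀ k, Ak k ^ (k+1) ≤ Ak (k+1) ^ k := by
    intro k
    induction k with
    | zero => simp [hA0]
    | succ k ih =>
      rcases eq_or_lt_of_le (hAnn (k+1)) with h0 | hpos
      · rw [← h0]; rw [zero_pow (by omega)]; exact pow_nonneg (hAnn _) _
      · have h1 : Ak (k+1) ^ (2*(k+1)) ≤ Ak k ^ (k+1) * Ak (k+2) ^ (k+1) := by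
          rw [pow_mul, ← mul_pow]
          exact pow_le_pow_left₀ (sq_nonneg _) (hlc k) (k+1)
        have h2 : Ak k ^ (k+1) * Ak (k+2) ^ (k+1) ≤ Ak (k+1) ^ k * Ak (k+2) ^ (k+1) :=
          mul_le_mul_of_nonneg_right ih (pow_nonneg (hAnn _) _)
        have h3 : Ak (k+1) ^ (2*(k+1)) = Ak (k+1) ^ k * Ak (k+1) ^ (k+2) := by
          rw [← pow_add]; ring_nf
        rw [h3] at h1
        have h4 : Ak (k+1) ^ k * Ak (k+1) ^ (k+2) ≤ Ak (k+1) ^ k * Ak (k+2) ^ (k+1) :=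
          le_trans h1 h2
        exact le_of_mul_le_mul_left h4 (pow_pos hpos k)
  have S2 : ∀ k, w ≤ k → Ak w ^ k ≤ Ak k ^ w := by
    intro k
    induction k with
    | zero => intro h; interval_cases w; simp
    | succ k ih =>
      intro hwk
      rcases Nat.lt_or_ge w (k+1) with hlt | hge
      · have hwk' : w ≤ k := by omega
        have ihk := ih hwk'
        rcases Nat.eq_zero_or_pos k with rfl | hkpos
        · interval_cases w
          · simp [hA0]
        · have h1 : (Ak w ^ (k+1)) ^ k ≤ (Ak (k+1) ^ w) ^ k := by
            calc (Ak w ^ (k+1)) ^ k = (Ak w ^ k) ^ (k+1) := by rw [← pow_mul, ← pow_mul]; ring_nf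
              _ ≤ (Ak k ^ w) ^ (k+1) := pow_le_pow_left₀ (pow_nonneg (hAnn _) _) ihk _
              _ = (Ak k ^ (k+1)) ^ w := by rw [← pow_mul, ← pow_mul]; ring_nf
              _ ≤ (Ak (k+1) ^ k) ^ w := pow_le_pow_left₀ (pow_nonneg (hAnn _) _) (S1 k) _
              _ = (Ak (k+1) ^ w) ^ k := by rw [← pow_mul, ← pow_mul]; ring_nf
          exact le_of_pow_le_pow_left₀ (by omega) (pow_nonneg (hAnn _) _) h1
      · have : w = k+1 := by omega
        subst this; rfl
  have hS := S2 R hw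
  have hRpos : (0:ℝ) < (R:ℝ) := by exact_mod_cast hR
  have h1 : Ak w = (Ak w ^ (R:ℕ)) ^ ((1:ℝ)/(R:ℝ)) := by
    rw [← Real.rpow_natCast (Ak w) R, ← Real.rpow_mul (hAnn w)]
    rw [mul_one_div, div_self (ne_of_gt hRpos), Real.rpow_one]
  have h2 : (Ak R ^ (w:ℕ)) ^ ((1:ℝ)/(R:ℝ)) = Ak R ^ ((w:ℝ)/(R:ℝ)) := by
    rw [← Real.rpow_natCast (Ak R) w, ← Real.rpow_mul (hAnn R), mul_one_div]
  calc Ak w = (Ak w ^ (R:ℕ)) ^ ((1:ℝ)/(R:ℝ)) := h1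
    _ ≤ (Ak R ^ (w:ℕ)) ^ ((1:ℝ)/(R:ℝ)) := by
        apply Real.rpow_le_rpow (pow_nonneg (hAnn _) _) hS (by positivity)
    _ = Ak R ^ ((w:ℝ)/(R:ℝ)) := h2

end Pos

/-! ### Commutation machinery -/

noncomputable def cf (V b j : ℕ) : ℂ :=
  (Complex.I)^j * (j.factorial : ℂ) * (V.choose j : ℂ) * (b.choose j : ℂ)

lemma cf_abs (V b j : ℕ) : ‖cf V b j‖
    = (j.factorial : ℝ) * (V.choose j : ℝ) * (b.choose j : ℝ) := by
  simp [cf, map_mul, Complex.norm_natCast, norm_pow]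

lemma cf_id (V b j : ℕ) : cf V b (j+1) + cf V b j * ((V-j : ℕ):ℂ) * Complex.I
    = cf V (b+1) (j+1) := by
  have h1 : (V.choose (j+1) * (j+1) : ℕ) = (V.choose j * (V - j) : ℕ) :=
    Nat.choose_succ_right_eq V j
  have h1' : ((V.choose (j+1)):ℂ) * ((j:ℂ)+1) = (V.choose j : ℂ) * ((V-j : ℕ) : ℂ) := by
    exact_mod_cast congrArg (Nat.cast (R := ℂ)) h1
  have h2 : ((b+1).choose (j+1) : ℂ) = (b.choose j : ℂ) + (b.choose (j+1) : ℂ) := by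
    exact_mod_cast congrArg (Nat.cast (R := ℂ)) (Nat.choose_succ_succ b j)
  simp only [cf, Nat.factorial_succ, pow_succ, h2]
  push_cast
  linear_combination (-1 * Complex.I^j * (j.factorial:ℂ) * (b.choose j : ℂ) * Complex.I) * h1'

section Alg
variable {A : Type*} [Ring A] [Algebra ℂ A]
variable (φ π Φ₀ : A)

lemma phi_pik (hccr : φ * π - π * φ = Complex.I • (1 : A)) :
    ∀ k : ℕ, φ * π^k = π^k * φ + ((k:ℂ) * Complex.I) • π^(k-1) := by
  have h1 : φ * π = π * φ + Complex.I • (1:A) :=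
    (eq_add_of_sub_eq hccr).trans (add_comm _ _)
  intro k
  induction k with
  | zero => simp
  | succ k ih =>
    rw [pow_succ, ← mul_assoc, ih, add_mul, mul_assoc, h1]
    rcases Nat.eq_zero_or_pos k with rfl | hk
    · simp [mul_add, Algebra.mul_smul_comm]
    · have e : π ^ (k-1) * π = π ^ k := by
        rw [← pow_succ]; congr 1; omega
      rw [Algebra.smul_mul_assoc, e, mul_add]
      push_cast [Nat.add_sub_cancel]
      rw [Algebra.mul_smul_comm, mul_one, ← mul_assoc]
      rw [add_mul, one_mul, add_smul]
      abel

set_option maxHeartbeats 1000000 in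
lemma comm_f (hccr : φ * π - π * φ = Complex.I • (1 : A)) :
    ∀ (b V : ℕ), φ^b * π^V = ∑ j ∈ range (b+1), cf V b j • (π^(V-j) * φ^(b-j)) := by
  intro b
  induction b with
  | zero => intro V; simp [cf]
  | succ b ih =>
    intro V
    have hstep : φ^(b+1) * π^V = φ * (φ^b * π^V) := by
      rw [pow_succ', mul_assoc]
    rw [hstep, ih V, Finset.mul_sum]
    have hterm : ∀ j ∈ range (b+1),
        φ * (cf V b j • (π^(V-j) * φ^(b-j)))
        = cf V b j • (π^(V-j) * φ^((b+1)-j))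
          + (cf V b j * ((V-j:ℕ):ℂ) * Complex.I) • (π^(V-(j+1)) * φ^(b-j)) := by
      intro j hj
      have hjb : j ≤ b := by simp at hj; omega
      have e1 : (b-j)+1 = (b+1)-j := by omega
      have e2 : (V-j)-1 = V-(j+1) := by omega
      have inner : φ * (π^(V-j) * φ^(b-j)) = π^(V-j) * φ^((b+1)-j)
          + ((((V-j):ℕ):ℂ) * Complex.I) • (π^(V-(j+1)) * φ^(b-j)) := by
        rw [← mul_assoc, phi_pik φ π hccr (V-j), add_mul, mul_assoc, ← pow_succ', e1,
          Algebra.smul_mul_assoc, e2]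
      rw [mul_smul_comm, inner, smul_add, smul_smul]
      congr 1
      congr 1
      ring
    rw [Finset.sum_congr rfl hterm, Finset.sum_add_distrib]
    have pad : ∑ j ∈ range (b+1), cf V b j • (π^(V-j) * φ^((b+1)-j))
        = ∑ j ∈ range (b+2), cf V b j • (π^(V-j) * φ^((b+1)-j)) := by
      have hz0 : cf V b (b+1) = 0 := by
        simp [cf, Nat.choose_eq_zero_of_lt (Nat.lt_succ_self b)]
      conv_rhs => rw [Finset.sum_range_succ]
      rw [hz0, zero_smul, add_zero]
    rw [pad]
    rw [Finset.sum_range_succ' (fun j => cf V b j • (π^(V-j) * φ^((b+1)-j))) (b+1)]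
    rw [Finset.sum_range_succ' (fun j => cf V (b+1) j • (π^(V-j) * φ^((b+1)-j))) (b+1)]
    have hz : cf V (b+1) 0 = cf V b 0 := by simp [cf]
    rw [hz]
    rw [add_right_comm, ← Finset.sum_add_distrib]
    congr 1
    apply Finset.sum_congr rfl
    intro j hj
    have e3 : b - j = (b+1) - (j+1) := by omega
    rw [e3, ← add_smul]
    congr 1
    exact cf_id V b j

lemma mono_id (hcφ : Φ₀ * φ = φ * Φ₀) (hcπ : Φ₀ * π = π * Φ₀)
    (a c x w y : ℕ) :
    Φ₀^x * (π^a * φ^c) * φ^w * Φ₀^y = π^a * φ^(c+w) * Φ₀^(x+y) := by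
  have hπΦ : Φ₀^x * π^a = π^a * Φ₀^x := (Commute.pow_pow hcπ x a)
  have hφΦ : Φ₀^x * φ^(c+w) = φ^(c+w) * Φ₀^x := (Commute.pow_pow hcφ x (c+w))
  calc Φ₀^x * (π^a * φ^c) * φ^w * Φ₀^y
      = Φ₀^x * (π^a * φ^(c+w)) * Φ₀^y := by rw [mul_assoc (Φ₀^x), mul_assoc (π^a), ← pow_add]
    _ = π^a * (Φ₀^x * φ^(c+w)) * Φ₀^y := by rw [← mul_assoc, ← mul_assoc, hπΦ]
    _ = π^a * φ^(c+w) * Φ₀^(x+y) := by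
        rw [hφΦ, ← mul_assoc, mul_assoc (π ^ a * φ ^ (c+w)) (Φ₀^x) (Φ₀^y), ← pow_add]

end Alg

section Exp
variable {A : Type*} [Ring A] [Algebra ℂ A]
variable (ω : A →ₗ[ℂ] ℂ) (φ π Φ₀ : A)

lemma expand_ω (hccr : φ * π - π * φ = Complex.I • (1 : A))
    (hcφ : Φ₀ * φ = φ * Φ₀) (hcπ : Φ₀ * π = π * Φ₀) (V q w x y : ℕ) :
    ω (Φ₀^x * φ^q * π^V * φ^w * Φ₀^y)
    = ∑ j ∈ range (q+1), cf V q j * ω (π^(V-j) * φ^((q-j)+w) * Φ₀^(x+y)) := by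
  have e : Φ₀^x * φ^q * π^V * φ^w * Φ₀^y
      = ∑ j ∈ range (q+1), cf V q j • (π^(V-j) * φ^((q-j)+w) * Φ₀^(x+y)) := by
    rw [mul_assoc (Φ₀^x) (φ^q) (π^V), comm_f φ π hccr q V, Finset.mul_sum,
      Finset.sum_mul, Finset.sum_mul]
    apply Finset.sum_congr rfl
    intro j hj
    rw [mul_smul_comm, Algebra.smul_mul_assoc, Algebra.smul_mul_assoc]
    rw [mono_id φ π Φ₀ hcφ hcπ]
  rw [e, map_sum]
  apply Finset.sum_congr rfl
  intro j hj
  rw [LinearMap.map_smul, smul_eq_mul]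

end Exp

/-! ### The sandwich bound -/

set_option maxHeartbeats 1000000 in
lemma sand {A : Type*} [Ring A] [Algebra ℂ A]
    (ω : A →ₗ[ℂ] ℂ) (φ π Φ₀ : A)
    (hccr : φ * π - π * φ = Complex.I • (1 : A))
    (hcφ : Φ₀ * φ = φ * Φ₀) (hcπ : Φ₀ * π = π * Φ₀)
    (GX Dd Cc : ℝ) (hGX : 0 ≤ GX) (hC : 0 ≤ Cc) (hCD : Cc ≤ Dd)
    (V q x : ℕ) (hVq : 2*((V:ℝ)*(q:ℝ)) ≤ Cc^2)
    (hch : ∀ j, j ≤ q → ‖ω (π^(V-j) * φ^(2*q-j) * Φ₀^(2*x))‖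
        ≤ 3 * GX * Dd^(V-j) * Cc^(2*q-j)) :
    (ω (Φ₀^x * φ^q * π^V * φ^q * Φ₀^x)).re ≤ 6 * GX * Dd^V * Cc^(2*q) := by
  have hD : 0 ≤ Dd := hC.trans hCD
  have hexp2 : ω (Φ₀^x * φ^q * π^V * φ^q * Φ₀^x)
      = ∑ j ∈ range (q+1), cf V q j * ω (π^(V-j) * φ^(2*q-j) * Φ₀^(2*x)) := by
    rw [expand_ω ω φ π Φ₀ hccr hcφ hcπ V q q x x]
    apply Finset.sum_congr rfl
    intro j hj
    rw [Finset.mem_range] at hj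
    have e1 : (q-j)+q = 2*q-j := by omega
    have e2 : x+x = 2*x := by omega
    rw [e1, e2]
  have coefkey : ∀ j, j ≤ q →
      ((j.factorial : ℝ) * (V.choose j : ℝ) * (q.choose j : ℝ)) * (Dd^(V-j)*Cc^(2*q-j))
      ≤ (1/2:ℝ)^j * (Dd^V*Cc^(2*q)) := by
    intro j hjq
    rcases Nat.lt_or_ge V j with hVj | hjV
    · rw [Nat.choose_eq_zero_of_lt hVj]
      simp
      positivity
    · have c1 : ((j.factorial : ℝ) * (V.choose j : ℝ)) ≤ (V:ℝ)^j := by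
        have := Nat.descFactorial_le_pow V j
        rw [Nat.descFactorial_eq_factorial_mul_choose] at this
        exact_mod_cast this
      have c2 : ((q.choose j : ℝ)) ≤ (q:ℝ)^j := by
        have h1 : q.choose j ≤ q.descFactorial j := by
          rw [Nat.descFactorial_eq_factorial_mul_choose]
          exact Nat.le_mul_of_pos_left _ (j.factorial_pos)
        have := le_trans h1 (Nat.descFactorial_le_pow q j)
        exact_mod_cast this
      have cnn : (0:ℝ) ≤ (q.choose j : ℝ) := by positivity
      have c12 : ((j.factorial : ℝ) * (V.choose j : ℝ) * (q.choose j : ℝ))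
          ≤ (V:ℝ)^j * (q:ℝ)^j := by
        apply mul_le_mul c1 c2 cnn (by positivity)
      have c3 : ((V:ℝ)*(q:ℝ))^j ≤ (Cc^2/2)^j := by
        apply pow_le_pow_left₀ (by positivity)
        linarith
      have c4 : Cc^j * Dd^(V-j) ≤ Dd^V := by
        calc Cc^j * Dd^(V-j) ≤ Dd^j * Dd^(V-j) :=
              mul_le_mul_of_nonneg_right (pow_le_pow_left₀ hC hCD j) (by positivity)
          _ = Dd^V := by rw [← pow_add]; congr 1; omega
      have c5 : Cc^j * Cc^(2*q-j) = Cc^(2*q) := by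
        rw [← pow_add]; congr 1; omega
      calc ((j.factorial : ℝ) * (V.choose j : ℝ) * (q.choose j : ℝ)) * (Dd^(V-j)*Cc^(2*q-j))
          ≤ ((V:ℝ)^j * (q:ℝ)^j) * (Dd^(V-j)*Cc^(2*q-j)) := by
            apply mul_le_mul_of_nonneg_right c12 (by positivity)
        _ = ((V:ℝ)*(q:ℝ))^j * (Dd^(V-j)*Cc^(2*q-j)) := by rw [mul_pow]
        _ ≤ (Cc^2/2)^j * (Dd^(V-j)*Cc^(2*q-j)) := by
            apply mul_le_mul_of_nonneg_right c3 (by positivity)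
        _ = (1/2:ℝ)^j * ((Cc^j * Dd^(V-j)) * (Cc^j * Cc^(2*q-j))) := by
            ring
        _ ≤ (1/2:ℝ)^j * (Dd^V * Cc^(2*q)) := by
            apply mul_le_mul_of_nonneg_left ?_ (by positivity)
            rw [c5]
            apply mul_le_mul_of_nonneg_right c4 (by positivity)
  calc (ω (Φ₀^x * φ^q * π^V * φ^q * Φ₀^x)).re
      ≤ ‖ω (Φ₀^x * φ^q * π^V * φ^q * Φ₀^x)‖ := Complex.re_le_norm _
    _ = ‖∑ j ∈ range (q+1), cf V q j * ω (π^(V-j) * φ^(2*q-j) * Φ₀^(2*x))‖ := by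
        rw [hexp2]
    _ ≤ ∑ j ∈ range (q+1), ‖cf V q j * ω (π^(V-j) * φ^(2*q-j) * Φ₀^(2*x))‖ :=
        norm_sum_le _ _
    _ ≤ ∑ j ∈ range (q+1), (3 * GX * Dd^V * Cc^(2*q)) * (1/2:ℝ)^j := by
        apply Finset.sum_le_sum
        intro j hj
        rw [Finset.mem_range] at hj
        have hjq : j ≤ q := by omega
        rw [norm_mul, cf_abs]
        calc (j.factorial : ℝ) * (V.choose j : ℝ) * (q.choose j : ℝ)
              * ‖ω (π^(V-j) * φ^(2*q-j) * Φ₀^(2*x))‖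
            ≤ (j.factorial : ℝ) * (V.choose j : ℝ) * (q.choose j : ℝ)
              * (3 * GX * Dd^(V-j) * Cc^(2*q-j)) := by
              apply mul_le_mul_of_nonneg_left (hch j hjq) (by positivity)
          _ = (3*GX) * (((j.factorial : ℝ) * (V.choose j : ℝ) * (q.choose j : ℝ))
                * (Dd^(V-j) * Cc^(2*q-j))) := by ring
          _ ≤ (3*GX) * ((1/2:ℝ)^j * (Dd^V*Cc^(2*q))) := by
              apply mul_le_mul_of_nonneg_left (coefkey j hjq) (by positivity)
          _ = (3 * GX * Dd^V * Cc^(2*q)) * (1/2:ℝ)^j := by ring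
    _ = (3 * GX * Dd^V * Cc^(2*q)) * (∑ j ∈ range (q+1), (1/2:ℝ)^j) := by
        rw [Finset.mul_sum]
    _ ≤ (3 * GX * Dd^V * Cc^(2*q)) * 2 := by
        apply mul_le_mul_of_nonneg_left (sum_geometric_two_le _) (by positivity)
    _ = 6 * GX * Dd^V * Cc^(2*q) := by ring

set_option maxHeartbeats 4000000 in
theorem main_ind {A : Type*} [Ring A] [Algebra ℂ A] [StarRing A] [StarModule ℂ A]
    (ω : A →ₗ[ℂ] ℂ) (hω1 : ω 1 = 1) (hωpos : ∀ a : A, 0 ≤ ω (star a * a))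
    (φ π Φ₀ : A) (hφ : star φ = φ) (hπ : star π = π) (hΦ : star Φ₀ = Φ₀)
    (hccr : φ * π - π * φ = Complex.I • (1 : A))
    (hcφ : Φ₀ * φ = φ * Φ₀) (hcπ : Φ₀ * π = π * Φ₀)
    (c₁ : ℝ) (hc₁ : 1 ≤ c₁)
    (hmom : ∀ t : ℕ, 1 ≤ t → (ω (φ ^ (2 * t))).re ≤ (c₁ * t) ^ (2 * t))
    (n m : ℕ) (hn : 1 ≤ n) (hm : 1 ≤ m) :
    ∀ K p q u : ℕ, p + (if u = 0 then 0 else 2*m) ≤ K → p < 2*m →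
      2*(q+u) ≤ n*(2*m - p) →
      ‖ω (π^p * φ^q * Φ₀^u)‖ ≤
        3 * (ω (Φ₀ ^ (2*(n*m)))).re ^ ((u:ℝ)/(2*((n:ℝ)*(m:ℝ))))
          * (max ((ω (π ^ (2*m))).re ^ ((1:ℝ)/(2*(m:ℝ)))) (2*c₁*(n:ℝ)*(m:ℝ)))^p
          * (2*c₁*(n:ℝ)*(m:ℝ))^q := by
  have hher := herm ω hωpos
  have hcs := cs ω hωpos hher
  have hsqel : ∀ (X : A), star X = X → ∀ k : ℕ, star (X^k) * X^k = X^(2*k) := by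
    intro X hX k; rw [star_pow, hX, ← pow_add, two_mul]
  set P : ℝ := (ω (π ^ (2*m))).re with hPdef
  set Gm : ℝ := (ω (Φ₀ ^ (2*(n*m)))).re with hGdef
  set Cc : ℝ := 2*c₁*(n:ℝ)*(m:ℝ) with hCdef
  set Dd : ℝ := max (P ^ ((1:ℝ)/(2*(m:ℝ)))) Cc with hDdef
  have hm' : (1:ℝ) ≤ (m:ℝ) := by exact_mod_cast hm
  have hn' : (1:ℝ) ≤ (n:ℝ) := by exact_mod_cast hn
  have hCc2 : (2:ℝ) ≤ Cc := by
    rw [hCdef]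
    have a1 : (1:ℝ) ≤ c₁ * n := by nlinarith [mul_le_mul hc₁ hn' zero_le_one (le_trans zero_le_one hc₁)]
    have a2 : (1:ℝ) ≤ c₁ * n * m := by nlinarith [mul_le_mul a1 hm' zero_le_one (by linarith)]
    linarith
  have hCnn : (0:ℝ) ≤ Cc := by linarith
  have hCD : Cc ≤ Dd := le_max_right _ _
  have hDnn : (0:ℝ) ≤ Dd := le_trans hCnn hCD
  have hPnn : (0:ℝ) ≤ P := by
    rw [hPdef, ← hsqel π hπ m]; exact re_nn ω hωpos _
  have hGnn : (0:ℝ) ≤ Gm := by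
    rw [hGdef, ← hsqel Φ₀ hΦ (n*m)]; exact re_nn ω hωpos _
  have hPD : P ≤ Dd^(2*m) := by
    have h1 : (P ^ ((1:ℝ)/(2*(m:ℝ))))^(2*m) ≤ Dd^(2*m) :=
      pow_le_pow_left₀ (Real.rpow_nonneg hPnn _) (le_max_left _ _) _
    refine le_trans (le_of_eq ?_) h1
    rw [← Real.rpow_natCast (P ^ ((1:ℝ)/(2*(m:ℝ)))) (2*m), ← Real.rpow_mul hPnn]
    rw [show (1:ℝ)/(2*(m:ℝ)) * ((2*m : ℕ):ℝ) = 1 from by push_cast; field_simp]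
    rw [Real.rpow_one]
  have hφm : ∀ t : ℕ, t ≤ 2*(n*m) → (ω (φ^(2*t))).re ≤ Cc^(2*t) := by
    intro t ht
    rcases Nat.eq_zero_or_pos t with rfl | htp
    · simp [hω1]
    · refine le_trans (hmom t htp) ?_
      apply pow_le_pow_left₀ (by positivity)
      rw [hCdef]
      have h : (t:ℝ) ≤ 2*((n:ℝ)*(m:ℝ)) := by exact_mod_cast ht
      nlinarith
  have hπch : ∀ p' : ℕ, p' ≤ m → (ω (π^(2*p'))).re ≤ Dd^(2*p') := by
    intro p' hp'
    have h0 := mom_chain ω hωpos hω1 hcs π hπ m hm p' hp'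
    refine le_trans h0 ?_
    calc P ^ ((p':ℝ)/(m:ℝ)) ≤ (Dd^(2*m)) ^ ((p':ℝ)/(m:ℝ)) :=
          Real.rpow_le_rpow hPnn hPD (by positivity)
      _ = Dd^(2*p') := by
          rw [← Real.rpow_natCast Dd (2*m), ← Real.rpow_mul hDnn,
            show ((2*m:ℕ):ℝ) * ((p':ℝ)/(m:ℝ)) = ((2*p':ℕ):ℝ) from by
              push_cast; field_simp,
            Real.rpow_natCast]
  have hΦch : ∀ w : ℕ, w ≤ n*m → (ω (Φ₀^(2*w))).re ≤ Gm ^ ((w:ℝ)/((n:ℝ)*(m:ℝ))) := by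
    intro w hw
    have hnm1 : 1 ≤ n*m := Nat.one_le_iff_ne_zero.mpr (by positivity)
    have h0 := mom_chain ω hωpos hω1 hcs Φ₀ hΦ (n*m) hnm1 w hw
    refine le_trans h0 (le_of_eq ?_)
    rw [hGdef]
    congr 1
    push_cast
    ring
  have hVqgen : ∀ (a b : ℕ), (a:ℝ) ≤ (m:ℝ) → (b:ℝ) ≤ (n:ℝ)*(m:ℝ) →
      2*(((2*a:ℕ):ℝ)*((b:ℕ):ℝ)) ≤ Cc^2 := by
    intro a b ha hb
    have hann : (0:ℝ) ≤ (a:ℝ) := Nat.cast_nonneg a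
    have hbnn : (0:ℝ) ≤ (b:ℝ) := Nat.cast_nonneg b
    have hnm : (0:ℝ) ≤ (n:ℝ)*(m:ℝ) := by nlinarith
    have t1 : (a:ℝ)*(b:ℝ) ≤ (m:ℝ)*((n:ℝ)*(m:ℝ)) := mul_le_mul ha hb hbnn (by linarith)
    have t5 : (m:ℝ) ≤ (n:ℝ)*(m:ℝ) := by nlinarith
    have t6 : (m:ℝ)*((n:ℝ)*(m:ℝ)) ≤ ((n:ℝ)*(m:ℝ))*((n:ℝ)*(m:ℝ)) :=
      mul_le_mul_of_nonneg_right t5 hnm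
    have t2 : (1:ℝ) ≤ c₁*c₁ := by nlinarith
    have t7 : ((n:ℝ)*(m:ℝ))*((n:ℝ)*(m:ℝ)) ≤ (c₁*c₁)*(((n:ℝ)*(m:ℝ))*((n:ℝ)*(m:ℝ))) := by
      nlinarith [mul_nonneg hnm hnm]
    rw [hCdef]
    push_cast
    nlinarith [t1, t6, t7]
  have fin : ∀ (u' p' q' : ℕ) (E : ℝ), 0 ≤ E →
      E^2 ≤ 9 * Gm ^ ((u':ℝ)/((n:ℝ)*(m:ℝ))) * Dd^(2*p') * Cc^(2*q') →
      E ≤ 3 * Gm ^ ((u':ℝ)/(2*((n:ℝ)*(m:ℝ)))) * Dd^p' * Cc^q' := by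
    intro u' p' q' E hE h
    have hnm0 : (0:ℝ) < (n:ℝ)*(m:ℝ) :=
      mul_pos (lt_of_lt_of_le zero_lt_one hn') (lt_of_lt_of_le zero_lt_one hm')
    have hGe : (0:ℝ) ≤ Gm ^ ((u':ℝ)/(2*((n:ℝ)*(m:ℝ)))) := Real.rpow_nonneg hGnn _
    have hR : (0:ℝ) ≤ 3 * Gm ^ ((u':ℝ)/(2*((n:ℝ)*(m:ℝ)))) * Dd^p' * Cc^q' := by positivity
    refine le_of_pow_le_pow_left₀ (n := 2) (by norm_num) hR ?_
    have eg : (Gm ^ ((u':ℝ)/(2*((n:ℝ)*(m:ℝ)))))^(2:ℕ) = Gm ^ ((u':ℝ)/((n:ℝ)*(m:ℝ))) := by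
      rw [← Real.rpow_natCast (Gm ^ ((u':ℝ)/(2*((n:ℝ)*(m:ℝ))))) 2, ← Real.rpow_mul hGnn]
      congr 1
      field_simp
      ring
    have ed : (Dd^p')^(2:ℕ) = Dd^(2*p') := by rw [← pow_mul, mul_comm]
    have ecq : (Cc^q')^(2:ℕ) = Cc^(2*q') := by rw [← pow_mul, mul_comm]
    calc E^2 ≤ 9 * Gm ^ ((u':ℝ)/((n:ℝ)*(m:ℝ))) * Dd^(2*p') * Cc^(2*q') := h
      _ = (3 * Gm ^ ((u':ℝ)/(2*((n:ℝ)*(m:ℝ)))) * Dd^p' * Cc^q')^2 := by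
          rw [show (3 * Gm ^ ((u':ℝ)/(2*((n:ℝ)*(m:ℝ)))) * Dd^p' * Cc^q')^2
            = 9 * (Gm ^ ((u':ℝ)/(2*((n:ℝ)*(m:ℝ)))))^(2:ℕ) * (Dd^p')^(2:ℕ) * (Cc^q')^(2:ℕ)
            from by ring]
          rw [eg, ed, ecq]
  intro K
  induction K using Nat.strong_induction_on with
  | _ K IH =>
  intro p q u hK hp2m hbud
  have hqu : q + u ≤ n*m := by
    have c1 : 2*(q+u) ≤ n*(2*m) := hbud.trans (Nat.mul_le_mul_left n (Nat.sub_le _ _))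
    have c2 : n*(2*m) = 2*(n*m) := by ring
    exact Nat.le_of_mul_le_mul_left (c1.trans_eq c2) (by norm_num)
  have hq : q ≤ n*m := by omega
  have hu : u ≤ n*m := by omega
  have hq2 : q ≤ 2*(n*m) := by omega
  rcases Nat.eq_zero_or_pos p with rfl | hppos
  · -- base case p = 0
    have ea : (π:A)^0 * φ^q * Φ₀^u = star (φ^q) * Φ₀^u := by
      rw [pow_zero, one_mul, star_pow, hφ]
    have h1 := hcs (φ^q) (Φ₀^u)
    rw [hsqel φ hφ q, hsqel Φ₀ hΦ u] at h1
    refine fin u 0 q _ (norm_nonneg _) ?_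
    rw [ea]
    have hΦnn : 0 ≤ (ω (Φ₀^(2*u))).re := by
      rw [← hsqel Φ₀ hΦ u]; exact re_nn ω hωpos _
    calc (‖ω (star (φ^q) * Φ₀^u)‖)^2
        ≤ (ω (φ^(2*q))).re * (ω (Φ₀^(2*u))).re := h1
      _ ≤ Cc^(2*q) * Gm ^ ((u:ℝ)/((n:ℝ)*(m:ℝ))) :=
          mul_le_mul (hφm q hq2) (hΦch u hu) hΦnn (by positivity)
      _ ≤ 9 * Gm ^ ((u:ℝ)/((n:ℝ)*(m:ℝ))) * Dd^(2*0) * Cc^(2*q) := by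
          have hx : (0:ℝ) ≤ Gm ^ ((u:ℝ)/((n:ℝ)*(m:ℝ))) := Real.rpow_nonneg hGnn _
          have ht : (0:ℝ) ≤ Gm ^ ((u:ℝ)/((n:ℝ)*(m:ℝ))) * Cc^(2*q) :=
            mul_nonneg hx (by positivity)
          rw [pow_zero]
          nlinarith [ht]
  rcases le_or_gt m p with hmp | hpm
  · -- Case A : m ≤ p < 2m
    set r := p - m with hrdef
    have hmr : m + r = p := by omega
    have ea : π^p * φ^q * Φ₀^u = star (π^m) * (π^r * φ^q * Φ₀^u) := by
      rw [star_pow, hπ, ← mul_assoc, ← mul_assoc, ← pow_add, hmr]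
    have h1 := hcs (π^m) (π^r * φ^q * Φ₀^u)
    rw [hsqel π hπ m] at h1
    have ec : star (π^r * φ^q * Φ₀^u) * (π^r * φ^q * Φ₀^u)
        = Φ₀^u * φ^q * π^(2*r) * φ^q * Φ₀^u := by
      simp only [star_mul, star_pow, hπ, hφ, hΦ]
      rw [two_mul, pow_add]
      simp only [mul_assoc]
    rw [ec] at h1
    have hWnn : 0 ≤ (ω (Φ₀^u * φ^q * π^(2*r) * φ^q * Φ₀^u)).re := by
      rw [← ec]; exact re_nn ω hωpos _
    have hite : (if 2*u = 0 then 0 else 2*m) = (if u = 0 then 0 else 2*m) := by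
      by_cases hu0 : u = 0
      · simp [hu0]
      · simp [hu0, show ¬(2*u = 0) by omega]
    have hch : ∀ j, j ≤ q → ‖ω (π^(2*r-j) * φ^(2*q-j) * Φ₀^(2*u))‖
        ≤ 3 * (Gm ^ (((2*u:ℕ):ℝ)/(2*((n:ℝ)*(m:ℝ))))) * Dd^(2*r-j) * Cc^(2*q-j) := by
      intro j hj
      have hmeas : (2*r-j) + (if 2*u = 0 then 0 else 2*m) < K := by
        rw [hite]
        by_cases hu0 : u = 0 <;> simp [hu0] at hK ⊢ <;> omega
      have hbud' : 2*((2*q-j) + 2*u) ≤ n*(2*m - (2*r-j)) := by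
        have hb1 : 2*(2*(q+u)) ≤ 2*(n*(2*m-p)) := Nat.mul_le_mul_left 2 hbud
        have hb3 : 2*(2*m-p) = 2*m-2*r := by omega
        have hb2 : 2*(n*(2*m-p)) = n*(2*m-2*r) := by
          calc 2*(n*(2*m-p)) = n*(2*(2*m-p)) := by ring
            _ = n*(2*m-2*r) := by rw [hb3]
        have hb5 : n*(2*m-2*r) ≤ n*(2*m-(2*r-j)) := Nat.mul_le_mul_left n (by omega)
        calc 2*((2*q-j)+2*u) ≤ 2*(2*(q+u)) := by omega
          _ ≤ n*(2*m-2*r) := hb1.trans_eq hb2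
          _ ≤ n*(2*m-(2*r-j)) := hb5
      exact IH _ hmeas (2*r-j) (2*q-j) (2*u) (le_refl _) (by omega) hbud'
    have hVq : 2*(((2*r:ℕ):ℝ)*((q:ℕ):ℝ)) ≤ Cc^2 :=
      hVqgen r q (by exact_mod_cast (show r ≤ m by omega)) (by exact_mod_cast hq)
    have hsand := sand ω φ π Φ₀ hccr hcφ hcπ
        (Gm ^ (((2*u:ℕ):ℝ)/(2*((n:ℝ)*(m:ℝ))))) Dd Cc
        (Real.rpow_nonneg hGnn _) hCnn hCD (2*r) q u hVq hch
    have egx : (((2*u:ℕ)):ℝ)/(2*((n:ℝ)*(m:ℝ))) = (u:ℝ)/((n:ℝ)*(m:ℝ)) := by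
      push_cast
      rw [mul_div_mul_left _ _ (two_ne_zero)]
    rw [egx] at hsand
    refine fin u p q _ (norm_nonneg _) ?_
    rw [ea]
    calc (‖ω (star (π^m) * (π^r * φ^q * Φ₀^u))‖)^2
        ≤ P * (ω (Φ₀^u * φ^q * π^(2*r) * φ^q * Φ₀^u)).re := h1
      _ ≤ Dd^(2*m) * (6 * Gm ^ ((u:ℝ)/((n:ℝ)*(m:ℝ))) * Dd^(2*r) * Cc^(2*q)) :=
          mul_le_mul hPD hsand hWnn (by positivity)
      _ ≤ 9 * Gm ^ ((u:ℝ)/((n:ℝ)*(m:ℝ))) * Dd^(2*p) * Cc^(2*q) := by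
          have e : Dd^(2*m) * Dd^(2*r) = Dd^(2*p) := by
            rw [← pow_add]; congr 1; omega
          have hx : (0:ℝ) ≤ Gm ^ ((u:ℝ)/((n:ℝ)*(m:ℝ))) := Real.rpow_nonneg hGnn _
          have ht : (0:ℝ) ≤ Gm ^ ((u:ℝ)/((n:ℝ)*(m:ℝ))) * Cc^(2*q) * Dd^(2*p) :=
            mul_nonneg (mul_nonneg hx (by positivity)) (by positivity)
          calc Dd^(2*m) * (6 * Gm ^ ((u:ℝ)/((n:ℝ)*(m:ℝ))) * Dd^(2*r) * Cc^(2*q))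
              = 6 * Gm ^ ((u:ℝ)/((n:ℝ)*(m:ℝ))) * Cc^(2*q) * (Dd^(2*m) * Dd^(2*r)) := by ring
            _ = 6 * Gm ^ ((u:ℝ)/((n:ℝ)*(m:ℝ))) * Cc^(2*q) * Dd^(2*p) := by rw [e]
            _ ≤ 9 * Gm ^ ((u:ℝ)/((n:ℝ)*(m:ℝ))) * Dd^(2*p) * Cc^(2*q) := by nlinarith [ht]
  rcases le_or_gt (2*u) (n*m) with hub | hub
  · -- Case B1 : p < m, 2u ≤ nm
    have ea : π^p * φ^q * Φ₀^u = star (π^p) * (φ^q * Φ₀^u) := by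
      rw [star_pow, hπ, mul_assoc]
    have h1 := hcs (π^p) (φ^q * Φ₀^u)
    rw [hsqel π hπ p] at h1
    have cΦφ : Φ₀^u * φ^(2*q) = φ^(2*q) * Φ₀^u :=
      (Commute.pow_pow (show Commute Φ₀ φ from hcφ) u (2*q))
    have e2 : star (φ^q * Φ₀^u) * (φ^q * Φ₀^u) = star (Φ₀^(2*u)) * φ^(2*q) := by
      rw [star_mul, star_pow, star_pow, hφ, hΦ, star_pow, hΦ]
      calc (Φ₀^u * φ^q) * (φ^q * Φ₀^u)
          = Φ₀^u * (φ^(2*q) * Φ₀^u) := by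
            rw [mul_assoc, ← mul_assoc (φ^q), ← pow_add, ← two_mul]
        _ = Φ₀^u * (Φ₀^u * φ^(2*q)) := by rw [← cΦφ]
        _ = Φ₀^(2*u) * φ^(2*q) := by rw [← mul_assoc, ← pow_add, ← two_mul]
    rw [e2] at h1
    have hXnn : 0 ≤ (ω (star (Φ₀^(2*u)) * φ^(2*q))).re := by
      rw [← e2]; exact re_nn ω hωpos _
    have hX := Complex.re_le_norm (ω (star (Φ₀^(2*u)) * φ^(2*q)))
    have h2 := hcs (Φ₀^(2*u)) (φ^(2*q))
    rw [hsqel Φ₀ hΦ (2*u), hsqel φ hφ (2*q)] at h2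
    have hb1 : (ω (Φ₀^(2*(2*u)))).re ≤ Gm ^ (((2*u:ℕ):ℝ)/((n:ℝ)*(m:ℝ))) := hΦch (2*u) hub
    have hb2 : (ω (φ^(2*(2*q)))).re ≤ Cc^(2*(2*q)) := hφm (2*q) (by omega)
    have hπb := hπch p (by omega)
    have hφΦnn : 0 ≤ (ω (φ^(2*(2*q)))).re := by
      rw [← hsqel φ hφ (2*q)]; exact re_nn ω hωpos _
    -- X^2 ≤ Gm^{2u/nm} * Cc^{4q}
    have hX2 : ((ω (star (Φ₀^(2*u)) * φ^(2*q))).re)^2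
        ≤ Gm ^ (((2*u:ℕ):ℝ)/((n:ℝ)*(m:ℝ))) * Cc^(2*(2*q)) := by
      calc ((ω (star (Φ₀^(2*u)) * φ^(2*q))).re)^2
          ≤ (‖ω (star (Φ₀^(2*u)) * φ^(2*q))‖)^2 :=
            pow_le_pow_left₀ hXnn hX 2
        _ ≤ (ω (Φ₀^(2*(2*u)))).re * (ω (φ^(2*(2*q)))).re := h2
        _ ≤ Gm ^ (((2*u:ℕ):ℝ)/((n:ℝ)*(m:ℝ))) * Cc^(2*(2*q)) :=
            mul_le_mul hb1 hb2 hφΦnn (Real.rpow_nonneg hGnn _)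
    -- E^2 ≤ Dd^{2p} * X
    have hE2 : (‖ω (π^p * φ^q * Φ₀^u)‖)^2
        ≤ Dd^(2*p) * (ω (star (Φ₀^(2*u)) * φ^(2*q))).re := by
      rw [ea]
      calc (‖ω (star (π^p) * (φ^q * Φ₀^u))‖)^2
          ≤ (ω (π^(2*p))).re * (ω (star (Φ₀^(2*u)) * φ^(2*q))).re := h1
        _ ≤ Dd^(2*p) * (ω (star (Φ₀^(2*u)) * φ^(2*q))).re :=
            mul_le_mul_of_nonneg_right hπb hXnn
    -- combine quartically
    refine fin u p q _ (norm_nonneg _) ?_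
    have hT : (0:ℝ) ≤ 9 * Gm ^ ((u:ℝ)/((n:ℝ)*(m:ℝ))) * Dd^(2*p) * Cc^(2*q) := by
      have := Real.rpow_nonneg hGnn ((u:ℝ)/((n:ℝ)*(m:ℝ)))
      positivity
    refine le_of_pow_le_pow_left₀ (n := 2) (by norm_num) hT ?_
    have eg2 : (Gm ^ ((u:ℝ)/((n:ℝ)*(m:ℝ))))^(2:ℕ) = Gm ^ (((2*u:ℕ):ℝ)/((n:ℝ)*(m:ℝ))) := by
      rw [← Real.rpow_natCast (Gm ^ ((u:ℝ)/((n:ℝ)*(m:ℝ)))) 2, ← Real.rpow_mul hGnn]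
      congr 1
      push_cast
      ring
    have ecc : (Cc^(2*q))^(2:ℕ) = Cc^(2*(2*q)) := by rw [← pow_mul]; congr 1; ring
    calc ((‖ω (π^p * φ^q * Φ₀^u)‖)^2)^2
        ≤ (Dd^(2*p) * (ω (star (Φ₀^(2*u)) * φ^(2*q))).re)^2 :=
          pow_le_pow_left₀ (by positivity) hE2 2
      _ = (Dd^(2*p))^2 * ((ω (star (Φ₀^(2*u)) * φ^(2*q))).re)^2 := by ring
      _ ≤ (Dd^(2*p))^2 * (Gm ^ (((2*u:ℕ):ℝ)/((n:ℝ)*(m:ℝ))) * Cc^(2*(2*q))) :=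
          mul_le_mul_of_nonneg_left hX2 (by positivity)
      _ ≤ (9 * Gm ^ ((u:ℝ)/((n:ℝ)*(m:ℝ))) * Dd^(2*p) * Cc^(2*q))^2 := by
          rw [show (9 * Gm ^ ((u:ℝ)/((n:ℝ)*(m:ℝ))) * Dd^(2*p) * Cc^(2*q))^2
            = 81 * (Gm ^ ((u:ℝ)/((n:ℝ)*(m:ℝ))))^(2:ℕ) * (Dd^(2*p))^2 * (Cc^(2*q))^(2:ℕ)
            from by ring]
          rw [eg2, ecc]
          have hx : (0:ℝ) ≤ Gm ^ (((2*u:ℕ):ℝ)/((n:ℝ)*(m:ℝ))) := Real.rpow_nonneg hGnn _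
          nlinarith [mul_nonneg (mul_nonneg hx (pow_nonneg (pow_nonneg hDnn (2*p)) 2))
            (pow_nonneg hCnn (2*(2*q)))]
  · -- Case B2 : p < m, nm < 2u
    have hu0 : u ≠ 0 := by
      intro h; rw [h] at hub; omega
    have hcom : Commute (Φ₀^u) (star ((π^p*φ^q) : A)) := by
      rw [star_mul, star_pow, star_pow, hπ, hφ]
      exact Commute.pow_left (Commute.mul_right
        (Commute.pow_right (show Commute Φ₀ φ from hcφ) q)
        (Commute.pow_right (show Commute Φ₀ π from hcπ) p)) u
    have ecomm : star ((π^p*φ^q) : A) * Φ₀^u = star (π^p * φ^q * Φ₀^u) := by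
      rw [star_mul (π^p*φ^q) (Φ₀^u), star_pow, hΦ]
      exact hcom.eq.symm
    have eabs : ‖ω (π^p * φ^q * Φ₀^u)‖
        = ‖ω (star ((π^p*φ^q) : A) * Φ₀^u)‖ := by
      rw [ecomm, hher, Complex.norm_conj]
    have h1 := hcs ((π^p*φ^q) : A) (Φ₀^u)
    rw [hsqel Φ₀ hΦ u] at h1
    have e5 : star ((π^p*φ^q) : A) * (π^p*φ^q) = Φ₀^0 * φ^q * π^(2*p) * φ^q * Φ₀^0 := by
      simp only [star_mul, star_pow, hπ, hφ, pow_zero, one_mul, mul_one]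
      rw [two_mul, pow_add]
      simp only [mul_assoc]
    rw [e5] at h1
    have hWnn : 0 ≤ (ω (Φ₀^0 * φ^q * π^(2*p) * φ^q * Φ₀^0)).re := by
      rw [← e5]; exact re_nn ω hωpos _
    -- budget key : 4q + 2 ≤ n(2m-2p)
    have hS : 4*q + 2 ≤ n*(2*m-2*p) := by
      have k1 : 2*(2*(q+u)) ≤ 2*(n*(2*m-p)) := Nat.mul_le_mul_left 2 hbud
      have e0 : 2*(2*m-p) = (2*m-2*p) + 2*m := by omega
      have k3 : 2*(n*(2*m-p)) = n*(2*m-2*p) + 2*(n*m) := by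
        calc 2*(n*(2*m-p)) = n*(2*(2*m-p)) := by ring
          _ = n*((2*m-2*p) + 2*m) := by rw [e0]
          _ = n*(2*m-2*p) + n*(2*m) := by rw [mul_add]
          _ = n*(2*m-2*p) + 2*(n*m) := by ring
      have k4 : 4*(q+u) ≤ n*(2*m-2*p) + 2*(n*m) := by
        calc 4*(q+u) = 2*(2*(q+u)) := by ring
          _ ≤ 2*(n*(2*m-p)) := k1
          _ = n*(2*m-2*p) + 2*(n*m) := k3
      have k5 : 2*(n*m) + 2 ≤ 4*u := by
        have h := Nat.mul_le_mul_left 2 (show n*m+1 ≤ 2*u by omega)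
        omega
      generalize hA2 : n*(2*m-2*p) = A2 at k4 ⊢
      generalize hA3 : n*m = A3 at k4 k5
      omega
    have hch0 : ∀ j, j ≤ q → ‖ω (π^(2*p-j) * φ^(2*q-j) * Φ₀^(2*0))‖
        ≤ 3 * (1:ℝ) * Dd^(2*p-j) * Cc^(2*q-j) := by
      intro j hj
      have hmeas : (2*p-j) + (if (0:ℕ) = 0 then 0 else 2*m) < K := by
        have h0 : (if (0:ℕ) = 0 then 0 else 2*m) = 0 := by norm_num
        have h1 : (if u = 0 then 0 else 2*m) = 2*m := by simp [hu0]
        rw [h1] at hK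
        rw [h0]
        omega
      have hbud' : 2*((2*q-j) + 0) ≤ n*(2*m - (2*p-j)) := by
        have r1 : n*(2*m-2*p) ≤ n*(2*m-(2*p-j)) := Nat.mul_le_mul_left n (by omega)
        calc 2*((2*q-j)+0) ≤ 4*q + 2 := by omega
          _ ≤ n*(2*m-2*p) := hS
          _ ≤ n*(2*m-(2*p-j)) := r1
      have := IH _ hmeas (2*p-j) (2*q-j) 0 (le_refl _) (by omega) hbud'
      rw [show ((0:ℕ):ℝ)/(2*((n:ℝ)*(m:ℝ))) = 0 from by norm_num, Real.rpow_zero] at this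
      simpa using this
    have hVq : 2*(((2*p:ℕ):ℝ)*((q:ℕ):ℝ)) ≤ Cc^2 :=
      hVqgen p q (by exact_mod_cast (show p ≤ m by omega)) (by exact_mod_cast hq)
    have hsand := sand ω φ π Φ₀ hccr hcφ hcπ (1:ℝ) Dd Cc
        (by norm_num) hCnn hCD (2*p) q 0 hVq hch0
    have hΦb : (ω (Φ₀^(2*u))).re ≤ Gm ^ ((u:ℝ)/((n:ℝ)*(m:ℝ))) := hΦch u hu
    have hΦnn : 0 ≤ (ω (Φ₀^(2*u))).re := by
      rw [← hsqel Φ₀ hΦ u]; exact re_nn ω hωpos _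
    refine fin u p q _ (norm_nonneg _) ?_
    rw [eabs]
    calc (‖ω (star ((π^p*φ^q) : A) * Φ₀^u)‖)^2
        ≤ (ω (Φ₀^0 * φ^q * π^(2*p) * φ^q * Φ₀^0)).re * (ω (Φ₀^(2*u))).re := h1
      _ ≤ (6 * 1 * Dd^(2*p) * Cc^(2*q)) * (Gm ^ ((u:ℝ)/((n:ℝ)*(m:ℝ)))) :=
          mul_le_mul hsand hΦb hΦnn (by positivity)
      _ ≤ 9 * Gm ^ ((u:ℝ)/((n:ℝ)*(m:ℝ))) * Dd^(2*p) * Cc^(2*q) := by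
          have hx : (0:ℝ) ≤ Gm ^ ((u:ℝ)/((n:ℝ)*(m:ℝ))) := Real.rpow_nonneg hGnn _
          nlinarith [mul_nonneg (mul_nonneg hx (pow_nonneg hDnn (2*p)))
            (pow_nonneg hCnn (2*q))]

end Stmt7

/-- Moment separation bound (Proposition 6 of the paper, with `n = 2κ`):
for a state `ω` on a unital ℂ-star-algebra, self-adjoint `φ, π` with
`φπ - πφ = i·1` and self-adjoint `Φ₀` commuting with `φ, π`, if `c₁ ≥ 1` and
`⟨φ^{2t}⟩ ≤ (c₁ t)^{2t}` for all `t ≥ 1`, then for all `m ≥ 1`, `1 ≤ s ≤ 2m`,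
and `s', s''` with `2(s' + s'') ≤ n s`,
`|⟨π^{2m-s} φ^{s'} Φ₀^{s''}⟩| ≤ 3 ⟨Φ₀^{2nm}⟩^{s''/(2nm)} ·
  max( ⟨π^{2m}⟩^{1-s/(2m)} (2c₁nm)^{s'}, (2c₁nm)^{2m+s'-s} )`. -/
theorem stmt_7 {A : Type*} [Ring A] [Algebra ℂ A] [StarRing A] [StarModule ℂ A]
    (ω : A →ₗ[ℂ] ℂ) (hω1 : ω 1 = 1) (hωpos : ∀ a : A, 0 ≤ ω (star a * a))
    (φ π Φ₀ : A) (hφ : star φ = φ) (hπ : star π = π) (hΦ : star Φ₀ = Φ₀)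
    (hccr : φ * π - π * φ = Complex.I • (1 : A))
    (hcφ : Φ₀ * φ = φ * Φ₀) (hcπ : Φ₀ * π = π * Φ₀)
    (c₁ : ℝ) (hc₁ : 1 ≤ c₁)
    (hmom : ∀ t : ℕ, 1 ≤ t → (ω (φ ^ (2 * t))).re ≤ (c₁ * t) ^ (2 * t))
    (n : ℕ) (hn : 1 ≤ n) :
    ∀ m s s' s'' : ℕ, 1 ≤ m → 1 ≤ s → s ≤ 2 * m → 2 * (s' + s'') ≤ n * s →
      ‖ω (π ^ (2 * m - s) * φ ^ s' * Φ₀ ^ s'')‖ ≤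
        3 * (ω (Φ₀ ^ (2 * n * m))).re ^ ((s'' : ℝ) / (2 * n * m)) *
          max ((ω (π ^ (2 * m))).re ^ (1 - (s : ℝ) / (2 * m)) *
                (2 * c₁ * n * m) ^ s')
              ((2 * c₁ * n * m) ^ (2 * m + s' - s)) := by
  intro m s s' s'' hm hs hs2m hbud
  have key := Stmt7.main_ind ω hω1 hωpos φ π Φ₀ hφ hπ hΦ hccr hcφ hcπ c₁ hc₁ hmom n m hn hm
    ((2*m - s) + 2*m) (2*m - s) s' s''
    (by by_cases h : s'' = 0 <;> simp [h])
    (by omega)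
    (by rw [show 2*m - (2*m - s) = s by omega]; omega)
  set P : ℝ := (ω (π ^ (2*m))).re with hPdef
  have hPnn : (0:ℝ) ≤ P := by
    have h : (π:A)^(2*m) = star (π^m) * π^m := by
      rw [star_pow, hπ, ← pow_add, two_mul]
    rw [hPdef, h]
    have := hωpos (π^m); rw [Complex.nonneg_iff] at this; exact this.1
  have hm' : (1:ℝ) ≤ (m:ℝ) := by exact_mod_cast hm
  have hn' : (1:ℝ) ≤ (n:ℝ) := by exact_mod_cast hn
  set Cc : ℝ := 2*c₁*(n:ℝ)*(m:ℝ) with hCdef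
  have hCnn : (0:ℝ) ≤ Cc := by rw [hCdef]; positivity
  -- rewrite the Φ₀-moment exponent
  have e1 : (2*(n*m)) = 2*n*m := (mul_assoc 2 n m).symm
  rw [e1] at key
  have e2 : ((s'':ℝ)/(2*((n:ℝ)*(m:ℝ)))) = ((s'' : ℝ) / (2 * n * m)) := by
    ring_nf
  rw [e2] at key
  refine key.trans (le_of_eq ?_)
  -- now: 3 * X * Dd^(2m-s) * Cc^(s') = 3 * X * max (...)
  rw [mul_assoc (3 * (ω (Φ₀ ^ (2*n*m))).re ^ ((s'' : ℝ) / (2 * n * m)))]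
  congr 1
  -- Dd^(2m-s) * Cc^s' = max ...
  have hmaxpow : (max (P ^ ((1:ℝ)/(2*(m:ℝ)))) Cc)^(2*m-s)
      = max ((P ^ ((1:ℝ)/(2*(m:ℝ))))^(2*m-s)) (Cc^(2*m-s)) := by
    rcases le_total (P ^ ((1:ℝ)/(2*(m:ℝ)))) Cc with h | h
    · rw [max_eq_right h, max_eq_right (pow_le_pow_left₀ (Real.rpow_nonneg hPnn _) h _)]
    · rw [max_eq_left h, max_eq_left (pow_le_pow_left₀ hCnn h _)]
  rw [hmaxpow, max_mul_of_nonneg _ _ (pow_nonneg hCnn s')]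
  congr 1
  · -- (P^{1/2m})^{2m-s} * Cc^{s'} = P^{1-s/2m} * Cc^{s'}
    congr 1
    rw [← Real.rpow_natCast (P ^ ((1:ℝ)/(2*(m:ℝ)))) (2*m-s), ← Real.rpow_mul hPnn]
    congr 1
    have hcast : ((2*m-s:ℕ):ℝ) = 2*(m:ℝ) - (s:ℝ) := by
      push_cast [Nat.cast_sub hs2m]
      ring
    rw [hcast]
    have hm0 : (2*(m:ℝ)) ≠ 0 := by positivity
    field_simp
  · rw [← pow_add]
    congr 1
    omega
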